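/- Let M be a matching between bids B and asks A, where both M (by bid competitiveness of its transactions) and B are sorted in descending order of bid competitiveness, and let M_β = FOB(M, B) = f(M, B, 0). Then M_β is fair on bids: for all bids b₁, b₂ ∈ B with b₁ more competitive than b₂, if b₂ participates in M_β (i.e., Q(b₂, M_β) ≥ 1), then b₁ is fully traded in M_β (i.e., Q(b₁, M_β) = q(b₁)). -/

import Mathlib

structure Bid where
  id : ℕ
  timestamp : ℕ
  quantity : ℕ
  price : ℕ
deriving DecidableEq

structure Ask where
  id : ℕ
  timestamp : ℕ
  quantity : ℕ
  price : ℕ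
deriving DecidableEq

structure Transaction where
  bid : Bid
  ask : Ask
  quantity : ℕ
  price : ℕ
deriving DecidableEq

/-- Total traded quantity of a list of transactions. -/
def Qty (M : List Transaction) : ℕ := (M.map Transaction.quantity).sum

/-- Total traded quantity of bid `b` in `M`. -/
def QtyBid (b : Bid) (M : List Transaction) : ℕ :=
  ((M.filter (fun m => m.bid == b)).map Transaction.quantity).sum

/-- Total traded quantity of ask `a` in `M`. -/
def QtyAsk (a : Ask) (M : List Transaction) : ℕ :=
  ((M.filter (fun m => m.ask == a)).map Transaction.quantity).sum

/-- Total traded quantity between bid `b` and ask `a` in `M`. -/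
def QtyBidAsk (b : Bid) (a : Ask) (M : List Transaction) : ℕ :=
  ((M.filter (fun m => m.bid == b && m.ask == a)).map Transaction.quantity).sum

/-- Sum of quantities of a list of bids. -/
def QB (B : List Bid) : ℕ := (B.map Bid.quantity).sum

/-- Sum of quantities of a list of asks. -/
def QA (A : List Ask) : ℕ := (A.map Ask.quantity).sum

/-- `M` is a matching between bids `B` and asks `A`. -/
def Matching (B : List Bid) (A : List Ask) (M : List Transaction) : Prop :=
  (∀ m ∈ M, m.ask.price ≤ m.bid.price) ∧
  (∀ m ∈ M, m.bid ∈ B) ∧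
  (∀ m ∈ M, m.ask ∈ A) ∧
  (∀ b ∈ B, QtyBid b M ≤ b.quantity) ∧
  (∀ a ∈ A, QtyAsk a M ≤ a.quantity)

/-- Individual rationality. -/
def IsIR (M : List Transaction) : Prop :=
  ∀ m ∈ M, m.ask.price ≤ m.price ∧ m.price ≤ m.bid.price

/-- Uniformity: all trade prices equal. -/
def IsUniform (M : List Transaction) : Prop :=
  ∀ m1 ∈ M, ∀ m2 ∈ M, m1.price = m2.price

/-- `b1` is more competitive than `b2`. -/
def MoreCompetitiveBid (b1 b2 : Bid) : Prop :=
  b2.price < b1.price ∨ (b1.price = b2.price ∧ b1.timestamp < b2.timestamp)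

/-- `a1` is more competitive than `a2`. -/
def MoreCompetitiveAsk (a1 a2 : Ask) : Prop :=
  a1.price < a2.price ∨ (a1.price = a2.price ∧ a1.timestamp < a2.timestamp)

def FairOnBids (B : List Bid) (M : List Transaction) : Prop :=
  ∀ b1 ∈ B, ∀ b2 ∈ B, MoreCompetitiveBid b1 b2 → 1 ≤ QtyBid b2 M →
    QtyBid b1 M = b1.quantity

def FairOnAsks (A : List Ask) (M : List Transaction) : Prop :=
  ∀ a1 ∈ A, ∀ a2 ∈ A, MoreCompetitiveAsk a1 a2 → 1 ≤ QtyAsk a2 M →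
    QtyAsk a1 M = a1.quantity

def IsFair (B : List Bid) (A : List Ask) (M : List Transaction) : Prop :=
  FairOnBids B M ∧ FairOnAsks A M

/-- "at least as competitive as" order on bids (for sorting, most competitive first). -/
def BidGE (b1 b2 : Bid) : Prop := ¬ MoreCompetitiveBid b2 b1

/-- "at least as competitive as" order on asks (for sorting, most competitive first). -/
def AskGE (a1 a2 : Ask) : Prop := ¬ MoreCompetitiveAsk a2 a1

/-- The fair-on-bids recursion `f(M, B, t)`. -/
def fob : List Transaction → List Bid → ℕ → List Transaction
  | [], _, _ => []
  | _ :: _, [], _ => []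
  | m :: M', b :: B', t =>
    if m.quantity = b.quantity - t then
      ⟨b, m.ask, m.quantity, m.price⟩ :: fob M' B' 0
    else if m.quantity < b.quantity - t then
      ⟨b, m.ask, m.quantity, m.price⟩ :: fob M' (b :: B') (t + m.quantity)
    else
      ⟨b, m.ask, b.quantity - t, m.price⟩ ::
        fob (⟨m.bid, m.ask, m.quantity - (b.quantity - t), m.price⟩ :: M') B' 0
termination_by M B _ => M.length + B.length
decreasing_by all_goals (simp; try omega)

lemma QtyBid_cons (b : Bid) (x : Transaction) (L : List Transaction) :
    QtyBid b (x :: L) = (if x.bid = b then x.quantity else 0) + QtyBid b L := by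
  simp [QtyBid, List.filter_cons]
  split
  · simp_all [QtyBid]
  · simp_all [QtyBid]

lemma QtyBid_fob_notmem : ∀ (M : List Transaction) (B : List Bid) (t : ℕ) (b : Bid),
    b ∉ B → QtyBid b (fob M B t) = 0 := by
  intro M B t
  induction M, B, t using fob.induct with
  | case1 => intro b _; simp [fob, QtyBid]
  | case2 => intro b _; simp [fob, QtyBid]
  | case3 m M' bb B' t h ih =>
    intro b hb
    simp only [fob, if_pos h, QtyBid_cons]
    have : bb ≠ b := by intro e; exact hb (e ▸ List.mem_cons_self)
    rw [if_neg this, ih b (fun h' => hb (List.mem_cons_of_mem _ h'))]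
  | case4 m M' bb B' t h1 h2 ih =>
    intro b hb
    simp only [fob, if_neg h1, if_pos h2, QtyBid_cons]
    have : bb ≠ b := by intro e; exact hb (e ▸ List.mem_cons_self)
    rw [if_neg this, ih b hb]
  | case5 m M' bb B' t h1 h2 ih =>
    intro b hb
    simp only [fob, if_neg h1, if_neg h2, QtyBid_cons]
    have : bb ≠ b := by intro e; exact hb (e ▸ List.mem_cons_self)
    rw [if_neg this, ih b (fun h' => hb (List.mem_cons_of_mem _ h'))]

lemma two_mem_sublist {α : Type*} {l : List α} {a b : α}
    (ha : a ∈ l) (hb : b ∈ l) (hne : a ≠ b) :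
    [a, b].Sublist l ∨ [b, a].Sublist l := by
  induction l with
  | nil => simp at ha
  | cons c l' ih =>
    rcases List.mem_cons.1 ha with rfl | ha'
    · have hb' : b ∈ l' := by
        rcases List.mem_cons.1 hb with rfl | h
        · exact absurd rfl hne
        · exact h
      exact Or.inl (List.Sublist.cons₂ _ (List.singleton_sublist.2 hb'))
    · rcases List.mem_cons.1 hb with rfl | hb'
      · exact Or.inr (List.Sublist.cons₂ _ (List.singleton_sublist.2 ha'))
      · rcases ih ha' hb' with h | h
        · exact Or.inl (h.cons _)
        · exact Or.inr (h.cons _)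

lemma fob_main : ∀ (M : List Transaction) (B : List Bid) (t : ℕ) (b1 b2 : Bid),
    B.Nodup → [b1, b2].Sublist B → 1 ≤ QtyBid b2 (fob M B t) →
    QtyBid b1 (fob M B t) = b1.quantity - (if B.head? = some b1 then t else 0) := by
  intro M B t
  induction M, B, t using fob.induct with
  | case1 B t =>
    intro b1 b2 _ _ hq; simp [fob, QtyBid] at hq
  | case2 =>
    intro b1 b2 _ _ hq; simp [fob, QtyBid] at hq
  | case3 m M' bb B' t h ih =>
    intro b1 b2 hnd hsub hq
    simp only [fob, if_pos h, QtyBid_cons] at hq ⊢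
    have hbbB' : bb ∉ B' := (List.nodup_cons.1 hnd).1
    by_cases hb1 : bb = b1
    · subst hb1
      rw [if_pos rfl, QtyBid_fob_notmem _ _ _ _ hbbB']
      simp [h]
    · rw [if_neg hb1]
      have hsub' : [b1, b2].Sublist B' := by
        cases hsub with
        | cons _ hs => exact hs
        | cons_cons _ hs => exact absurd rfl hb1
      have hb2 : bb ≠ b2 := by
        intro e; subst e
        exact hbbB' (hsub'.subset (by simp))
      rw [if_neg hb2] at hq
      have := ih b1 b2 (List.nodup_cons.1 hnd).2 hsub' (by omega)
      rw [this, ite_self]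
      simp [hb1]
  | case4 m M' bb B' t h1 h2 ih =>
    intro b1 b2 hnd hsub hq
    simp only [fob, if_neg h1, if_pos h2, QtyBid_cons] at hq ⊢
    have hbbB' : bb ∉ B' := (List.nodup_cons.1 hnd).1
    have hb2mem : b2 ∈ B' := by
      have : b2 ∈ bb :: B' := hsub.subset (by simp)
      rcases List.mem_cons.1 this with rfl | h
      · -- b2 = bb: then b1 appears before b2 in bb::B', but bb nodup head
        -- from sublist [b1, b2] <+ bb :: B' with b2 = bb: b1,b2 both forced:
        cases hsub with
        | cons _ hs => exact absurd (hs.subset (by simp)) hbbB'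
        | cons_cons _ hs =>
          exact absurd (hs.subset (by simp)) hbbB'
      · exact h
    have hb2 : bb ≠ b2 := fun e => hbbB' (e ▸ hb2mem)
    rw [if_neg hb2] at hq
    have := ih b1 b2 hnd hsub (by omega)
    by_cases hb1 : bb = b1
    · subst hb1
      simp at this ⊢
      omega
    · simp only [List.head?_cons, Option.some.injEq, if_neg hb1] at this ⊢
      omega
  | case5 m M' bb B' t h1 h2 ih =>
    intro b1 b2 hnd hsub hq
    simp only [fob, if_neg h1, if_neg h2, QtyBid_cons] at hq ⊢
    have hbbB' : bb ∉ B' := (List.nodup_cons.1 hnd).1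
    by_cases hb1 : bb = b1
    · subst hb1
      rw [if_pos rfl, QtyBid_fob_notmem _ _ _ _ hbbB']
      simp
    · rw [if_neg hb1]
      have hsub' : [b1, b2].Sublist B' := by
        cases hsub with
        | cons _ hs => exact hs
        | cons_cons _ hs => exact absurd rfl hb1
      have hb2 : bb ≠ b2 := by
        intro e; subst e
        exact hbbB' (hsub'.subset (by simp))
      rw [if_neg hb2] at hq
      have := ih b1 b2 (List.nodup_cons.1 hnd).2 hsub' (by omega)
      rw [this, ite_self]
      simp [hb1]

theorem statement_10 (B : List Bid) (A : List Ask) (M : List Transaction)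
    (hB : (B.map Bid.id).Nodup) (hA : (A.map Ask.id).Nodup)
    (hM : Matching B A M)
    (hsortM : List.Pairwise (fun m1 m2 => BidGE m1.bid m2.bid) M)
    (hsortB : List.Pairwise BidGE B) :
    FairOnBids B (fob M B 0) := by
  intro b1 hb1 b2 hb2 hmc hq
  have hnd : B.Nodup := hB.of_map
  have hne : b1 ≠ b2 := by
    rintro rfl
    rcases hmc with h | ⟨_, h⟩ <;> omega
  have hsub : [b1, b2].Sublist B := by
    rcases two_mem_sublist hb1 hb2 hne with h | h
    · exact h
    · exfalso
      have := (List.pairwise_iff_forall_sublist.1 hsortB) h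
      exact this hmc
  have := fob_main M B 0 b1 b2 hnd hsub hq
  rw [this]
  split <;> simp
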